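/- Let p be a prime with p ≠ 3. There are no nonzero integers a, b such that b² = 2⁵·p⁵·a·(a²+1)·(a²+2) with a odd. -/

import Mathlib

private lemma natAbs_lt_of_sq_lt {a b : ℤ} (h : a ^ 2 < b ^ 2) : a.natAbs < b.natAbs := by
  by_contra hc
  push_neg at hc
  have h1 : (b.natAbs : ℤ) ≤ (a.natAbs : ℤ) := by exact_mod_cast hc
  have h2 : (0:ℤ) ≤ (b.natAbs : ℤ) := by positivity
  have hb : b ^ 2 ≤ a ^ 2 := by
    rw [← Int.natAbs_sq a, ← Int.natAbs_sq b]
    nlinarith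
  linarith

/-- Step for the case `y` even in the descent: from a primitive triple leg decomposition,
produce a strictly smaller solution of `X⁴ = Y⁴ + Z²`. -/
private lemma step_lemma (m n x y : ℤ) (hgcd : Int.gcd m n = 1) (hm : Odd m)
    (hmpos : 0 < m) (hnpos : 0 < n) (hxpos : 0 < x)
    (hx2 : x ^ 2 = m ^ 2 + n ^ 2) (hy2 : y ^ 2 = 2 * m * n) :
    ∃ X Y Z : ℤ, Y ≠ 0 ∧ Z ≠ 0 ∧ X ^ 4 = Y ^ 4 + Z ^ 2 ∧ X.natAbs < x.natAbs := by
  have ht : PythagoreanTriple m n x := by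
    have : m * m + n * n = x * x := by linear_combination -hx2
    exact this
  obtain ⟨r, s, hm1, hn1, hx1, hrs, hparity, hr0⟩ :=
    ht.coprime_classification' hgcd (Int.odd_iff.mp hm) hxpos
  -- r, s positive
  have hrpos : 0 < r := by
    rcases lt_or_eq_of_le hr0 with h | h
    · exact h
    · exfalso; rw [← h] at hn1; simp at hn1; omega
  have hspos : 0 < s := by nlinarith
  have hcop_rs : IsCoprime r s := Int.isCoprime_iff_gcd_eq_one.mpr hrs
  have hcop_rm : IsCoprime r m := by
    have h1 : IsCoprime r (-(s ^ 2) + r * r) :=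
      ((hcop_rs.pow_right).neg_right).add_mul_left_right r
    have e : -(s ^ 2) + r * r = m := by linear_combination -hm1
    rwa [e] at h1
  have hcop_sm : IsCoprime s m := by
    have h1 : IsCoprime s (r ^ 2 + s * (-s)) :=
      (hcop_rs.symm.pow_right).add_mul_left_right (-s)
    have e : r ^ 2 + s * (-s) = m := by linear_combination -hm1
    rwa [e] at h1
  -- y is even, w² = m r s
  have hyeven : Even y := by
    have h1 : Even (y ^ 2) := ⟨2 * m * r * s, by linear_combination hy2 + 2 * m * hn1⟩
    exact (Int.even_pow.mp h1).1
  obtain ⟨w, hw⟩ := hyeven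
  have hwmrs : w ^ 2 = m * (r * s) := by
    have : (w + w) ^ 2 = 2 * m * (2 * r * s) := by rw [← hw, ← hn1]; exact hy2
    linarith [this]
  have hmpos' : 0 < m := hmpos
  -- m, r, s are all squares
  obtain ⟨t, htm | htm⟩ := Int.sq_of_isCoprime (hcop_rm.symm.mul_right hcop_sm.symm) hwmrs.symm
  swap
  · exfalso; nlinarith [sq_nonneg t]
  obtain ⟨g, hgr | hgr⟩ := Int.sq_of_isCoprime (hcop_rm.mul_right hcop_rs)
    (show r * (m * s) = w ^ 2 by linear_combination -hwmrs)
  swap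
  · exfalso; nlinarith [sq_nonneg g]
  obtain ⟨h, hhs | hhs⟩ := Int.sq_of_isCoprime (hcop_sm.mul_right hcop_rs.symm)
    (show s * (m * r) = w ^ 2 by linear_combination -hwmrs)
  swap
  · exfalso; nlinarith [sq_nonneg h]
  refine ⟨g, h, t, ?_, ?_, ?_, ?_⟩
  · intro h0; rw [h0] at hhs; nlinarith [hspos, hhs]
  · intro h0; rw [h0] at htm; nlinarith [hmpos, htm]
  · -- g⁴ = h⁴ + t²
    linear_combination (-(g ^ 2 + r)) * hgr + (h ^ 2 + s) * hhs + htm - hm1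
  · -- g.natAbs < x.natAbs
    have hg1 : (g.natAbs : ℤ) ≤ g ^ 2 := by
      have h1 : ((g.natAbs ^ 2 : ℕ) : ℤ) = g ^ 2 := by
        rw [Nat.cast_pow]
        exact Int.natAbs_sq g
      have h2 : g.natAbs ≤ g.natAbs ^ 2 := Nat.le_self_pow two_ne_zero _
      calc (g.natAbs : ℤ) ≤ ((g.natAbs ^ 2 : ℕ) : ℤ) := by exact_mod_cast h2
        _ = g ^ 2 := h1
    have hg2 : g ^ 2 < x := by
      have h1 : r < r ^ 2 + s ^ 2 := by
        have h2 : r ≤ r ^ 2 := le_self_pow₀ (by linarith) two_ne_zero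
        have h3 : (0:ℤ) < s ^ 2 := by positivity
        linarith
      rw [hx1, ← hgr]
      exact h1
    have hx' : (x.natAbs : ℤ) = x := Int.natAbs_of_nonneg (le_of_lt hxpos)
    have hlt2 : (g.natAbs : ℤ) < (x.natAbs : ℤ) := by rw [hx']; linarith [hg1, hg2]
    exact_mod_cast hlt2

private lemma step_lemma' (m n x y : ℤ) (hgcd : Int.gcd m n = 1) (hm : m % 2 = 1)
    (hmn : 0 < m * n) (hxpos : 0 < x) (hx2 : x ^ 2 = m ^ 2 + n ^ 2)
    (hy2 : y ^ 2 = 2 * m * n) :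
    ∃ X Y Z : ℤ, Y ≠ 0 ∧ Z ≠ 0 ∧ X ^ 4 = Y ^ 4 + Z ^ 2 ∧ X.natAbs < x.natAbs := by
  have hmodd : Odd m := Int.odd_iff.mpr hm
  rcases lt_trichotomy m 0 with hneg | hzero | hpos
  · have hn : n < 0 := by nlinarith
    have hgcd' : Int.gcd (-m) (-n) = 1 := by
      rwa [Int.gcd, Int.natAbs_neg, Int.natAbs_neg]
    exact step_lemma (-m) (-n) x y hgcd' hmodd.neg (by omega) (by omega) hxpos
      (by linear_combination hx2) (by linear_combination hy2)
  · omega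
  · have hn : 0 < n := by nlinarith
    exact step_lemma m n x y hgcd hmodd hpos hn hxpos hx2 hy2

/-- Fermat descent: `x⁴ = y⁴ + z²` has no solutions with `y, z ≠ 0`. -/
private lemma descent_aux : ∀ N : ℕ, ∀ x y z : ℤ, x.natAbs ≤ N → y ≠ 0 → z ≠ 0 →
    x ^ 4 ≠ y ^ 4 + z ^ 2 := by
  intro N
  induction N using Nat.strong_induction_on with
  | _ N ih =>
  intro x y z hxN hy hz heq
  have hx0 : x ≠ 0 := by
    rintro rfl
    have h1 : (0:ℤ) < y ^ 4 := by positivity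
    have h2 : (0:ℤ) ≤ z ^ 2 := sq_nonneg z
    norm_num at heq
    nlinarith
  by_cases hgcd : Int.gcd x y = 1
  swap
  · -- gcd reduction
    have hg0 : Int.gcd x y ≠ 0 := fun h => hx0 (Int.gcd_eq_zero_iff.mp h).1
    set q := (Int.gcd x y).minFac with hq
    have hqp : q.Prime := Nat.minFac_prime hgcd
    have hqx : (q : ℤ) ∣ x := dvd_trans (Int.natCast_dvd_natCast.mpr (Nat.minFac_dvd _)) (Int.gcd_dvd_left x y)
    have hqy : (q : ℤ) ∣ y := dvd_trans (Int.natCast_dvd_natCast.mpr (Nat.minFac_dvd _)) (Int.gcd_dvd_right x y)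
    obtain ⟨x1, hx1⟩ := hqx
    obtain ⟨y1, hy1⟩ := hqy
    have hq0 : (q:ℤ) ≠ 0 := by exact_mod_cast hqp.ne_zero
    have hz2 : ((q:ℤ) ^ 2) ^ 2 ∣ z ^ 2 :=
      ⟨x1 ^ 4 - y1 ^ 4, by rw [hx1, hy1] at heq; linear_combination -heq⟩
    have hqz : (q:ℤ) ^ 2 ∣ z := (Int.pow_dvd_pow_iff two_ne_zero).mp hz2
    obtain ⟨z1, hz1⟩ := hqz
    have heq' : x1 ^ 4 = y1 ^ 4 + z1 ^ 2 := by
      have h1 : (q:ℤ) ^ 4 * x1 ^ 4 = (q:ℤ) ^ 4 * (y1 ^ 4 + z1 ^ 2) := by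
        rw [hx1, hy1, hz1] at heq; linear_combination heq
      exact mul_left_cancel₀ (by positivity) h1
    have hy10 : y1 ≠ 0 := by rintro rfl; simp at hy1; exact hy hy1
    have hz10 : z1 ≠ 0 := by rintro rfl; simp at hz1; exact hz hz1
    have hx10 : x1 ≠ 0 := by rintro rfl; simp at hx1; exact hx0 hx1
    have hlt : x1.natAbs < x.natAbs := by
      have h1 : x.natAbs = q * x1.natAbs := by
        rw [hx1, Int.natAbs_mul, Int.natAbs_natCast]
      have h2 : 2 ≤ q := hqp.two_le
      have h3 : 0 < x1.natAbs := Int.natAbs_pos.mpr hx10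
      nlinarith [h1, h2, h3]
    exact ih x1.natAbs (lt_of_lt_of_le hlt hxN) x1 y1 z1 le_rfl hy10 hz10 heq'
  -- now gcd x y = 1
  have hco : IsCoprime x y := Int.isCoprime_iff_gcd_eq_one.mpr hgcd
  -- x is odd
  have hxodd : Odd x := by
    rcases Int.even_or_odd x with hxe | hxo
    swap
    · exact hxo
    exfalso
    obtain ⟨X, hX⟩ := hxe
    have hyodd : Odd y := by
      rcases Int.even_or_odd y with hye | hyo
      · exfalso
        obtain ⟨Y, hY⟩ := hye
        obtain ⟨u, v, huv⟩ := hco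
        have : (2:ℤ) ∣ 1 := ⟨u * X + v * Y, by rw [hX, hY] at huv; linear_combination -huv⟩
        norm_num at this
      · exact hyo
    obtain ⟨Y, hY⟩ := hyodd
    rcases Int.even_or_odd z with hze | hzo
    · obtain ⟨Z, hZ⟩ := hze
      have key : (2:ℤ) ∣ 1 :=
        ⟨8 * X ^ 4 - 8 * (Y * Y + Y) ^ 2 - 4 * (Y * Y + Y) - 2 * (Z * Z),
          by rw [hX, hY, hZ] at heq; linear_combination -heq⟩
      norm_num at key
    · obtain ⟨Z, hZ⟩ := hzo
      have key : (4:ℤ) ∣ 2 :=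
        ⟨4 * X ^ 4 - 4 * (Y * Y + Y) ^ 2 - 2 * (Y * Y + Y) - (Z * Z + Z),
          by rw [hX, hY, hZ] at heq; linear_combination -heq⟩
      norm_num at key
  -- coprimality of y² and z
  have hcyz : IsCoprime (y ^ 2) z := by
    have h2 : IsCoprime (y ^ 2) (x ^ 4) := hco.symm.pow
    have h3 : IsCoprime (y ^ 2) (z ^ 2) := by
      have h4 := h2.add_mul_left_right (-(y ^ 2))
      have e : x ^ 4 + y ^ 2 * -(y ^ 2) = z ^ 2 := by linear_combination heq
      rwa [e] at h4
    exact h3.of_isCoprime_of_dvd_right (dvd_pow_self z two_ne_zero)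
  rcases Int.even_or_odd y with hyeven | hyodd
  · -- case y even: z odd
    have hzodd : Odd z := by
      rcases Int.even_or_odd z with hze | hzo
      · exfalso
        obtain ⟨X, hX⟩ := hxodd
        obtain ⟨Y, hY⟩ := hyeven
        obtain ⟨Z, hZ⟩ := hze
        have key : (2:ℤ) ∣ 1 :=
          ⟨1 + 8 * X ^ 4 + 16 * X ^ 3 + 12 * X ^ 2 + 4 * X - 8 * Y ^ 4 - 2 * Z ^ 2,
            by rw [hX, hY, hZ] at heq; linear_combination -heq⟩
        norm_num at key
      · exact hzo
    have htr : PythagoreanTriple z (y ^ 2) (x ^ 2) := by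
      have : z * z + y ^ 2 * y ^ 2 = x ^ 2 * (x ^ 2) := by linear_combination -heq
      exact this
    obtain ⟨m, n, hz', hy2', hx2', hmn, hpar, hm0⟩ :=
      htr.coprime_classification' (Int.isCoprime_iff_gcd_eq_one.mp hcyz.symm)
        (Int.odd_iff.mp hzodd) (by positivity)
    have hy2pos : 0 < y ^ 2 := by positivity
    have hXpos : (0:ℤ) < (x.natAbs : ℤ) := by
      exact_mod_cast Int.natAbs_pos.mpr hx0
    have hXsq : ((x.natAbs : ℤ)) ^ 2 = m ^ 2 + n ^ 2 := by rw [Int.natAbs_sq]; exact hx2'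
    rcases hpar with ⟨hme, hno⟩ | ⟨hmo, hne⟩
    · -- m even, n odd : use (n, m)
      obtain ⟨X, Y, Z, hY0, hZ0, heq2, hlt⟩ :=
        step_lemma' n m (x.natAbs : ℤ) y (by rwa [Int.gcd_comm] at hmn) hno
          (by nlinarith) hXpos (by linear_combination hXsq) (by linear_combination hy2')
      rw [Int.natAbs_natCast] at hlt
      exact ih X.natAbs (lt_of_lt_of_le hlt hxN) X Y Z le_rfl hY0 hZ0 heq2
    · -- m odd
      obtain ⟨X, Y, Z, hY0, hZ0, heq2, hlt⟩ :=
        step_lemma' m n (x.natAbs : ℤ) y hmn hmo (by nlinarith) hXpos hXsq hy2'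
      rw [Int.natAbs_natCast] at hlt
      exact ih X.natAbs (lt_of_lt_of_le hlt hxN) X Y Z le_rfl hY0 hZ0 heq2
  · -- case y odd
    have htr : PythagoreanTriple (y ^ 2) z (x ^ 2) := by
      have : y ^ 2 * y ^ 2 + z * z = x ^ 2 * (x ^ 2) := by linear_combination -heq
      exact this
    obtain ⟨m, n, hy2', hz', hx2', hmn, hpar, hm0⟩ :=
      htr.coprime_classification' (Int.isCoprime_iff_gcd_eq_one.mp hcyz)
        (Int.odd_iff.mp hyodd.pow) (by positivity)
    have hn0 : n ≠ 0 := by rintro rfl; simp at hz'; exact hz hz'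
    have hm0' : m ≠ 0 := by
      rintro rfl
      have : (0:ℤ) < y ^ 2 := by positivity
      nlinarith [sq_nonneg n]
    have hxy0 : x * y ≠ 0 := mul_ne_zero hx0 hy
    have heq2 : m ^ 4 = n ^ 4 + (x * y) ^ 2 := by
      linear_combination (n ^ 2 - m ^ 2) * hx2' - x ^ 2 * hy2'
    have hlt : m.natAbs < x.natAbs := by
      apply natAbs_lt_of_sq_lt
      have hn2 : 0 < n ^ 2 := by positivity
      nlinarith [hn2, hx2']
    exact ih m.natAbs (lt_of_lt_of_le hlt hxN) m n (x * y) le_rfl hn0 hxy0 heq2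

private lemma fourth_ne (x y z : ℤ) (hy : y ≠ 0) (hz : z ≠ 0) : x ^ 4 ≠ y ^ 4 + z ^ 2 :=
  descent_aux x.natAbs x y z le_rfl hy hz

private lemma not_sq_add_two (a t : ℤ) (ha : 0 < a) : a ^ 2 + 2 ≠ t ^ 2 := by
  intro h
  have h1 : ((t.natAbs : ℤ)) ^ 2 = a ^ 2 + 2 := by rw [Int.natAbs_sq]; omega
  have hu : (0:ℤ) ≤ (t.natAbs : ℤ) := by positivity
  rcases le_or_gt ((t.natAbs : ℤ)) a with hle | hlt
  · nlinarith
  · nlinarith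

private lemma coprime_two_of_odd (w : ℤ) (h : Odd w) : IsCoprime (2:ℤ) w := by
  obtain ⟨j, hj⟩ := h
  exact ⟨-j, 1, by rw [hj]; ring⟩

/-- For a prime `p ≠ 3`, there are no nonzero integers `a, b` with `a` odd such that
`b² = 2⁵·p⁵·a·(a²+1)·(a²+2)`. -/
theorem no_solution_p_ne_three (p : ℕ) (hp : p.Prime) (hp3 : p ≠ 3) :
    ¬ ∃ a b : ℤ, a ≠ 0 ∧ b ≠ 0 ∧ Odd a ∧
      b ^ 2 = 2 ^ 5 * (p : ℤ) ^ 5 * a * (a ^ 2 + 1) * (a ^ 2 + 2) := by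
  rintro ⟨a, b, ha0, hb0, ⟨k, rfl⟩, heq⟩
  have hpZ : (0:ℤ) < (p:ℤ) := by exact_mod_cast hp.pos
  have hp5 : (0:ℤ) < (p:ℤ) ^ 5 := by positivity
  have hb2 : (0:ℤ) < b ^ 2 := by positivity
  have hBpos : (0:ℤ) < 2 * k ^ 2 + 2 * k + 1 := by nlinarith [sq_nonneg (2*k+1)]
  have hCpos : (0:ℤ) < (2 * k + 1) ^ 2 + 2 := by positivity
  have hapos : (0:ℤ) < 2 * k + 1 := by
    by_contra hcon
    push_neg at hcon
    have h1 : 2 * k + 1 ≤ -1 := by omega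
    nlinarith [mul_pos (mul_pos hp5 hBpos) hCpos]
  have hk0 : (0:ℤ) ≤ k := by omega
  have hAodd : Odd (2 * k + 1 : ℤ) := ⟨k, by ring⟩
  have hBodd : Odd (2 * k ^ 2 + 2 * k + 1 : ℤ) := ⟨k ^ 2 + k, by ring⟩
  have hCodd : Odd ((2 * k + 1) ^ 2 + 2 : ℤ) := ⟨2 * k ^ 2 + 2 * k + 1, by ring⟩
  by_cases hp2 : p = 2
  · subst hp2
    have hM : ((2:ℤ) ^ 11) *
        ((2 * k + 1) * ((2 * k ^ 2 + 2 * k + 1) * ((2 * k + 1) ^ 2 + 2))) = b ^ 2 := by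
      push_cast
      linear_combination -heq
    have hco : IsCoprime ((2:ℤ) ^ 11)
        ((2 * k + 1) * ((2 * k ^ 2 + 2 * k + 1) * ((2 * k + 1) ^ 2 + 2))) :=
      ((coprime_two_of_odd _ hAodd).mul_right
        ((coprime_two_of_odd _ hBodd).mul_right (coprime_two_of_odd _ hCodd))).pow_left
    obtain ⟨t, ht | ht⟩ := Int.sq_of_isCoprime hco hM
    · have hn : (t.natAbs : ℤ) ^ 2 = 2048 := by rw [Int.natAbs_sq]; linarith [ht]
      have hu : (0:ℤ) ≤ (t.natAbs : ℤ) := by positivity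
      rcases le_or_gt ((t.natAbs : ℤ)) 45 with h | h
      · nlinarith [hn, h, hu]
      · nlinarith [hn, h, hu]
    · nlinarith [sq_nonneg t]
  · -- p odd
    have hpodd : Odd ((p:ℤ)) := by
      have := hp.odd_of_ne_two hp2
      exact_mod_cast this
    have hModd : Odd ((p:ℤ) ^ 5 *
        ((2 * k + 1) * ((2 * k ^ 2 + 2 * k + 1) * ((2 * k + 1) ^ 2 + 2)))) :=
      (hpodd.pow).mul (hAodd.mul (hBodd.mul hCodd))
    have hM64 : ((p:ℤ) ^ 5 * ((2 * k + 1) * ((2 * k ^ 2 + 2 * k + 1) * ((2 * k + 1) ^ 2 + 2))))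
        * 2 ^ 6 = b ^ 2 := by
      push_cast
      linear_combination -heq
    obtain ⟨s, hs | hs⟩ := Int.sq_of_isCoprime
      ((coprime_two_of_odd _ hModd).symm.pow_right) hM64
    swap
    · nlinarith [sq_nonneg s, mul_pos (mul_pos hp5 hapos) (mul_pos hBpos hCpos)]
    -- hs : p⁵ · A · B · C = s²
    have cAB : IsCoprime (2 * k + 1 : ℤ) (2 * k ^ 2 + 2 * k + 1) :=
      ⟨-(2 * k + 1), 2, by ring⟩
    have cAC : IsCoprime (2 * k + 1 : ℤ) ((2 * k + 1) ^ 2 + 2) :=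
      ⟨1 + k * (2 * k + 1), -k, by ring⟩
    have cBC : IsCoprime (2 * k ^ 2 + 2 * k + 1 : ℤ) ((2 * k + 1) ^ 2 + 2) :=
      ⟨-2, 1, by ring⟩
    by_cases hpC : (p:ℤ) ∣ ((2 * k + 1) ^ 2 + 2)
    · -- p ∣ a² + 2 : then A and B are squares
      have cAp : IsCoprime (2 * k + 1 : ℤ) ((p:ℤ)) := cAC.of_isCoprime_of_dvd_right hpC
      have cBp : IsCoprime (2 * k ^ 2 + 2 * k + 1 : ℤ) ((p:ℤ)) :=
        cBC.of_isCoprime_of_dvd_right hpC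
      obtain ⟨c, hc | hc⟩ := Int.sq_of_isCoprime
        ((cAp.pow_right).mul_right (cAB.mul_right cAC))
        (show (2 * k + 1 : ℤ) *
          ((p:ℤ) ^ 5 * ((2 * k ^ 2 + 2 * k + 1) * ((2 * k + 1) ^ 2 + 2))) = s ^ 2 by
            linear_combination hs)
      swap
      · nlinarith [sq_nonneg c]
      obtain ⟨d, hd | hd⟩ := Int.sq_of_isCoprime
        ((cBp.pow_right).mul_right (cAB.symm.mul_right cBC))
        (show (2 * k ^ 2 + 2 * k + 1 : ℤ) *
          ((p:ℤ) ^ 5 * ((2 * k + 1) * ((2 * k + 1) ^ 2 + 2))) = s ^ 2 by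
            linear_combination hs)
      swap
      · nlinarith [sq_nonneg d]
      have hkey : d ^ 4 = c ^ 4 + (2 * k ^ 2 + 2 * k) ^ 2 := by
        linear_combination (-(d ^ 2 + 2 * k ^ 2 + 2 * k + 1)) * hd +
          (c ^ 2 + 2 * k + 1) * hc
      have he : (2 * k ^ 2 + 2 * k : ℤ) = 0 := by
        by_contra hne
        have hc0 : c ≠ 0 := by
          rintro rfl
          norm_num at hc
          omega
        exact fourth_ne d c (2 * k ^ 2 + 2 * k) hc0 hne hkey
      have hk : k = 0 := by nlinarith [sq_nonneg k]
      rw [hk] at hpC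
      norm_num at hpC
      have h3 : p ∣ 3 := by exact_mod_cast hpC
      exact hp3 ((Nat.prime_dvd_prime_iff_eq hp (by norm_num)).mp h3)
    · -- p ∤ a² + 2 : then a² + 2 is a square, impossible
      have hpP : Prime ((p:ℤ)) := Nat.prime_iff_prime_int.mp hp
      have cCp : IsCoprime ((2 * k + 1) ^ 2 + 2 : ℤ) ((p:ℤ)) :=
        ((hpP.coprime_iff_not_dvd).mpr hpC).symm
      obtain ⟨t, ht | ht⟩ := Int.sq_of_isCoprime
        ((cCp.pow_right).mul_right (cAC.symm.mul_right cBC.symm))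
        (show ((2 * k + 1) ^ 2 + 2 : ℤ) *
          ((p:ℤ) ^ 5 * ((2 * k + 1) * (2 * k ^ 2 + 2 * k + 1))) = s ^ 2 by
            linear_combination hs)
      · exact not_sq_add_two (2 * k + 1) t hapos ht
      · nlinarith [sq_nonneg t]
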